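/- Let G be an unmixed graph as in the setup such that G contains no cycle C_{ij} for i < j. Then there exists a permutation σ of {1,...,n} such that, after simultaneously relabeling x_{σ(1)},...,x_{σ(n)} as x_1,...,x_n and y_{σ(1)},...,y_{σ(n)} as y_1,...,y_n, the relabeled graph satisfies: x_i y_j ∈ E(G) implies i ≤ j. -/

import Mathlib

open SimpleGraph

/-- `C` is a vertex cover of `G`. -/
def IsVC {V : Type*} (G : SimpleGraph V) (C : Set V) : Prop :=
  ∀ ⦃u v : V⦄, G.Adj u v → u ∈ C ∨ v ∈ C

/-- `C` is a minimal (inclusion-wise) vertex cover of `G`. -/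
def IsMinVC {V : Type*} (G : SimpleGraph V) (C : Set V) : Prop :=
  IsVC G C ∧ ∀ C' : Set V, C' ⊆ C → IsVC G C' → C' = C

/-- `A` is an independent set of `G`. -/
def IsIndep {V : Type*} (G : SimpleGraph V) (A : Set V) : Prop :=
  ∀ ⦃u v : V⦄, u ∈ A → v ∈ A → ¬ G.Adj u v

/-- `A` is a maximal independent set of `G`. -/
def IsMaxIndep {V : Type*} (G : SimpleGraph V) (A : Set V) : Prop :=
  IsIndep G A ∧ ∀ A' : Set V, A ⊆ A' → IsIndep G A' → A' = A

/-- `G` is unmixed: all minimal vertex covers have the same cardinality. -/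
def Unmixed {V : Type*} (G : SimpleGraph V) : Prop :=
  ∀ C₁ C₂ : Set V, IsMinVC G C₁ → IsMinVC G C₂ → C₁.ncard = C₂.ncard

/-- Vertex type with the two classes `X = {x_1,…,x_n}` (left) and `Y = {y_1,…,y_n}` (right). -/
abbrev VT (n : ℕ) := Fin n ⊕ Fin n

/-- The vertex `x_i`. -/
def xv {n : ℕ} (i : Fin n) : VT n := Sum.inl i

/-- The vertex `y_i`. -/
def yv {n : ℕ} (i : Fin n) : VT n := Sum.inr i

/-- The 4-cycle `C_{ij}` (edges `x_iy_i, y_ix_j, x_jy_j, y_jx_i`) is contained in `G`. -/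
def HasC2 {n : ℕ} (G : SimpleGraph (VT n)) (i j : Fin n) : Prop :=
  G.Adj (xv i) (yv i) ∧ G.Adj (yv i) (xv j) ∧ G.Adj (xv j) (yv j) ∧ G.Adj (yv j) (xv i)

/-- The `2r`-cycle `C_{i_1…i_r}` given by `f : Fin r → Fin n` is contained in `G`:
edges `x_{f s} y_{f s}` and `y_{f s} x_{f (s+1)}` (cyclically). -/
def IsCycleIn {n r : ℕ} (G : SimpleGraph (VT n)) (f : Fin r → Fin n) : Prop :=
  ∀ s : Fin r, G.Adj (xv (f s)) (yv (f s)) ∧ G.Adj (yv (f s)) (xv (f (finRotate r s)))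

/-- Any partial order relation on a fintype admits a monotone enumeration. -/
lemma topoPerm {α : Type} [Fintype α] (r : α → α → Prop)
    (hrefl : ∀ i, r i i)
    (hanti : ∀ i j, r i j → r j i → i = j)
    (htrans : ∀ i j k, r i j → r j k → r i k) :
    ∃ f : α ≃ Fin (Fintype.card α), ∀ a b, r a b → f a ≤ f b := by
  letI po : PartialOrder α :=
    { le := r
      le_refl := hrefl
      le_trans := htrans
      le_antisymm := hanti }
  letI : Fintype (LinearExtension α) := ‹Fintype α›
  have hcard : Fintype.card (LinearExtension α) = Fintype.card α := rfl
  let e := monoEquivOfFin (LinearExtension α) hcard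
  exact ⟨e.symm.toEquiv, fun a b hab => e.symm.le_iff_le.2 (toLinearExtension.monotone hab)⟩

/-- For an unmixed graph `G` (setup (*)) containing no cycle `C_{ij}` (`i < j`), there is a
simultaneous relabeling `σ` of the `x_i`'s and `y_i`'s after which `x_iy_j ∈ E(G)` implies
`i ≤ j`. -/
theorem exists_relabeling {n : ℕ} (G : SimpleGraph (VT n))
    (hni : ∀ v : VT n, ∃ u : VT n, G.Adj u v)
    (hX : IsMinVC G (Set.range (xv : Fin n → VT n)))
    (hY : IsMaxIndep G (Set.range (yv : Fin n → VT n)))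
    (hm : ∀ i : Fin n, G.Adj (xv i) (yv i))
    (hht : ∀ C : Set (VT n), IsVC G C → n ≤ C.ncard)
    (hu : Unmixed G)
    (h2 : ∀ i j : Fin n, i < j → ¬ HasC2 G i j) :
    ∃ σ : Equiv.Perm (Fin n), ∀ i j : Fin n, G.Adj (xv (σ i)) (yv (σ j)) → i ≤ j := by
  classical
  -- cardinality of the set X
  have hcardX : (Set.range (xv : Fin n → VT n)).ncard = n := by
    have h1 : (Set.range (xv : Fin n → VT n)).ncard = (Set.univ : Set (Fin n)).ncard := by
      rw [← Set.image_univ]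
      exact Set.ncard_image_of_injOn (fun a _ b _ h => Sum.inl.inj h)
    rw [h1, Set.ncard_univ, Nat.card_eq_fintype_card, Fintype.card_fin]
  -- complement of a maximal independent set is a minimal vertex cover
  have compl_minVC : ∀ A : Set (VT n), IsMaxIndep G A → IsMinVC G Aᶜ := by
    intro A ⟨hInd, hMax⟩
    constructor
    · intro u v huv
      by_contra hc
      push_neg at hc
      simp only [Set.mem_compl_iff, not_not] at hc
      exact hInd hc.1 hc.2 huv
    · intro C' hsub hC'
      -- every v ∉ A has a neighbor in A
      have hnbr : ∀ v : VT n, v ∉ A → ∃ a ∈ A, G.Adj v a := by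
        intro v hv
        by_contra hc
        push_neg at hc
        have hind' : IsIndep G (A ∪ {v}) := by
          intro p q hp hq hpq
          rcases hp with hp | hp
          · rcases hq with hq | hq
            · exact hInd hp hq hpq
            · rw [Set.mem_singleton_iff] at hq; subst hq
              exact hc p hp hpq.symm
          · rw [Set.mem_singleton_iff] at hp; subst hp
            rcases hq with hq | hq
            · exact hc q hq hpq
            · rw [Set.mem_singleton_iff] at hq; subst hq
              exact G.irrefl hpq
        have := hMax (A ∪ {v}) Set.subset_union_left hind'
        exact hv (this ▸ Set.mem_union_right A rfl : v ∈ A)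
      ext v
      simp only [Set.mem_compl_iff]
      constructor
      · intro hv; exact (hsub hv)
      · intro hv
        obtain ⟨a, ha, hva⟩ := hnbr v hv
        rcases hC' hva with h | h
        · exact h
        · exact absurd (hsub h) (by simp [ha])
  -- every maximal independent set has exactly n elements
  have maxIndep_ncard : ∀ A : Set (VT n), IsMaxIndep G A → A.ncard = n := by
    intro A hA
    have h1 : (Aᶜ).ncard = n := by
      rw [hu Aᶜ (Set.range xv) (compl_minVC A hA) hX]; exact hcardX
    have h2' := Set.ncard_add_ncard_compl A (Set.toFinite A) (Set.toFinite Aᶜ)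
    rw [h1, Nat.card_eq_fintype_card] at h2'
    simp only [VT, Fintype.card_sum, Fintype.card_fin] at h2'
    omega
  -- every independent set extends to a maximal one
  have extend : ∀ A0 : Set (VT n), IsIndep G A0 → ∃ A : Set (VT n),
      A0 ⊆ A ∧ IsMaxIndep G A := by
    intro A0 h0
    set S : Finset (Finset (VT n)) :=
      Finset.univ.filter (fun B => A0 ⊆ ↑B ∧ IsIndep G ↑B) with hS
    have hne : S.Nonempty := by
      refine ⟨A0.toFinset, ?_⟩
      simp only [hS, Finset.mem_filter, Finset.mem_univ, true_and]
      constructor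
      · rw [Set.coe_toFinset]
      · rw [Set.coe_toFinset]; exact h0
    obtain ⟨B, hB, hBmax⟩ := S.exists_max_image (fun B => B.card) hne
    simp only [hS, Finset.mem_filter, Finset.mem_univ, true_and] at hB
    refine ⟨↑B, hB.1, hB.2, ?_⟩
    intro A' hsub hA'
    have hmem : A'.toFinset ∈ S := by
      simp only [hS, Finset.mem_filter, Finset.mem_univ, true_and, Set.coe_toFinset]
      exact ⟨hB.1.trans hsub, hA'⟩
    have hcard := hBmax A'.toFinset hmem
    have hcard' : A'.ncard ≤ (↑B : Set (VT n)).ncard := by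
      rw [Set.ncard_eq_toFinset_card' A', Set.ncard_coe_finset]; exact hcard
    exact (Set.eq_of_subset_of_ncard_le hsub hcard' (Set.toFinite A')).symm
  -- the relation
  set r : Fin n → Fin n → Prop := fun i j => G.Adj (xv i) (yv j) with hr
  have hrefl : ∀ i, r i i := hm
  have hanti : ∀ i j, r i j → r j i → i = j := by
    intro i j hij hji
    by_contra hne
    rcases lt_trichotomy i j with h | h | h
    · exact h2 i j h ⟨hm i, hji.symm, hm j, hij.symm⟩
    · exact hne h
    · exact h2 j i h ⟨hm j, hij.symm, hm i, hji.symm⟩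
  have htrans : ∀ i j k, r i j → r j k → r i k := by
    intro i j k hij hjk
    by_cases hik : i = k
    · subst hik; exact hm i
    by_cases hij' : i = j
    · subst hij'; exact hjk
    by_cases hjk' : j = k
    · subst hjk'; exact hij
    by_contra hnc
    -- {x_i, y_k} is independent
    have h0 : IsIndep G ({xv i, yv k} : Set (VT n)) := by
      intro u v hu hv huv
      rcases hu with hu | hu <;> rcases hv with hv | hv <;>
        (try simp only [Set.mem_singleton_iff] at *) <;> subst hu <;> subst hv
      · exact G.irrefl huv
      · exact hnc huv
      · exact hnc huv.symm
      · exact G.irrefl huv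
    obtain ⟨A, hsubA, hAmax⟩ := extend _ h0
    have hxiA : xv i ∈ A := hsubA (by simp)
    have hykA : yv k ∈ A := hsubA (by simp)
    have hxjA : xv j ∉ A := fun h => hAmax.1 h hykA hjk
    have hyjA : yv j ∉ A := fun h => hAmax.1 hxiA h hij
    -- count: A injects into Fin n \ {j}
    set idx : VT n → Fin n := Sum.elim id id with hidx
    have hinjOn : Set.InjOn idx A := by
      intro u hu v hv huv
      match u, v with
      | Sum.inl a, Sum.inl b => simp only [hidx, Sum.elim_inl, id] at huv; rw [huv]
      | Sum.inl a, Sum.inr b =>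
        simp only [hidx, Sum.elim_inl, Sum.elim_inr, id] at huv
        subst huv
        exact absurd (hm a) (hAmax.1 hu hv)
      | Sum.inr a, Sum.inl b =>
        simp only [hidx, Sum.elim_inl, Sum.elim_inr, id] at huv
        subst huv
        exact absurd (hm a) (hAmax.1 hv hu)
      | Sum.inr a, Sum.inr b => simp only [hidx, Sum.elim_inr, id] at huv; rw [huv]
    have himg : idx '' A ⊆ ({j}ᶜ : Set (Fin n)) := by
      rintro t ⟨u, hu, hut⟩
      simp only [Set.mem_compl_iff, Set.mem_singleton_iff]
      intro htj
      subst htj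
      match u with
      | Sum.inl a =>
        simp only [hidx, Sum.elim_inl, id] at hut
        exact hxjA (hut ▸ hu)
      | Sum.inr a =>
        simp only [hidx, Sum.elim_inr, id] at hut
        exact hyjA (hut ▸ hu)
    have hlt : A.ncard ≤ n - 1 := by
      have e1 : (idx '' A).ncard = A.ncard := Set.ncard_image_of_injOn hinjOn
      have e2 : (idx '' A).ncard ≤ ({j}ᶜ : Set (Fin n)).ncard :=
        Set.ncard_le_ncard himg (Set.toFinite _)
      have e3 : ({j}ᶜ : Set (Fin n)).ncard = n - 1 := by
        have := Set.ncard_add_ncard_compl ({j} : Set (Fin n)) (Set.toFinite _) (Set.toFinite _)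
        rw [Set.ncard_singleton, Nat.card_eq_fintype_card, Fintype.card_fin] at this
        omega
      omega
    have hA_n : A.ncard = n := maxIndep_ncard A hAmax
    have hnpos : 0 < n := i.pos
    omega
  obtain ⟨f, hf⟩ := topoPerm r hrefl hanti htrans
  refine ⟨((f.trans (finCongr (Fintype.card_fin n))).symm : Equiv.Perm (Fin n)), ?_⟩
  intro i j hadj
  have := hf _ _ hadj
  simpa using this
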